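/- Let b(n) be the integer sequence with b(0) = 1, b(1) = -2, b(n) = -2·b(n-1) - 2·b(n-2) for n ≥ 2. Then for every ε > 0 there exists n such that 24 + ε·b(n) < 0. -/

import Mathlib

theorem no_nonnegativity_sturm_bound (b : ℕ → ℤ) (h0 : b 0 = 1) (h1 : b 1 = -2)
    (hrec : ∀ n, 2 ≤ n → b n = -2 * b (n - 1) - 2 * b (n - 2)) :
    ∀ ε : ℝ, 0 < ε → ∃ n : ℕ, (24 : ℝ) + ε * (b n : ℝ) < 0 := by
  have key : ∀ k : ℕ, b (8 * k) = 16 ^ k ∧ b (8 * k + 1) = -2 * 16 ^ k := by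
    intro k
    induction k with
    | zero => simp [h0, h1]
    | succ k ih =>
      obtain ⟨ha, hb⟩ := ih
      have e2 := hrec (8 * k + 2) (by omega)
      have e3 := hrec (8 * k + 3) (by omega)
      have e4 := hrec (8 * k + 4) (by omega)
      have e5 := hrec (8 * k + 5) (by omega)
      have e6 := hrec (8 * k + 6) (by omega)
      have e7 := hrec (8 * k + 7) (by omega)
      have e8 := hrec (8 * k + 8) (by omega)
      have e9 := hrec (8 * k + 9) (by omega)
      simp only [Nat.add_sub_cancel, show ∀ m, 8 * m + 2 - 1 = 8 * m + 1 from fun m => rfl,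
        show ∀ m, 8 * m + 3 - 1 = 8 * m + 2 from fun m => rfl,
        show ∀ m, 8 * m + 3 - 2 = 8 * m + 1 from fun m => rfl,
        show ∀ m, 8 * m + 4 - 1 = 8 * m + 3 from fun m => rfl,
        show ∀ m, 8 * m + 4 - 2 = 8 * m + 2 from fun m => rfl,
        show ∀ m, 8 * m + 5 - 1 = 8 * m + 4 from fun m => rfl,
        show ∀ m, 8 * m + 5 - 2 = 8 * m + 3 from fun m => rfl,
        show ∀ m, 8 * m + 6 - 1 = 8 * m + 5 from fun m => rfl,
        show ∀ m, 8 * m + 6 - 2 = 8 * m + 4 from fun m => rfl,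
        show ∀ m, 8 * m + 7 - 1 = 8 * m + 6 from fun m => rfl,
        show ∀ m, 8 * m + 7 - 2 = 8 * m + 5 from fun m => rfl,
        show ∀ m, 8 * m + 8 - 1 = 8 * m + 7 from fun m => rfl,
        show ∀ m, 8 * m + 8 - 2 = 8 * m + 6 from fun m => rfl,
        show ∀ m, 8 * m + 9 - 1 = 8 * m + 8 from fun m => rfl,
        show ∀ m, 8 * m + 9 - 2 = 8 * m + 7 from fun m => rfl] at e2 e3 e4 e5 e6 e7 e8 e9
      have h8 : 8 * (k + 1) = 8 * k + 8 := by ring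
      rw [h8, show 8 * k + 8 + 1 = 8 * k + 9 from rfl]
      constructor
      · rw [e8, e7, e6, e5, e4, e3, e2, hb, ha]; ring
      · rw [e9, e8, e7, e6, e5, e4, e3, e2, hb, ha]; ring
  intro ε hε
  obtain ⟨m, hm⟩ := exists_nat_gt (24 / (2 * ε))
  refine ⟨8 * m + 1, ?_⟩
  have hb := (key m).2
  rw [hb]
  push_cast
  have hpow : (m : ℝ) ≤ 16 ^ m := by
    calc (m : ℝ) ≤ 2 ^ m := by exact_mod_cast (Nat.lt_two_pow_self (n := m)).le
    _ ≤ 16 ^ m := by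
      apply pow_le_pow_left₀ (by norm_num) (by norm_num)
  have h24 : 24 < 2 * ε * (16 : ℝ) ^ m := by
    rw [div_lt_iff₀ (by linarith)] at hm
    nlinarith
  nlinarith
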